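/- Let l be an odd prime, n ≥ 1, and let A be an n × n complex matrix such that every row and every column of A contains exactly one nonzero entry, and every nonzero entry of A is an l-th root of unity. If the trace of A equals (n − 1) + ζ for some l-th root of unity ζ with ζ ≠ 1, then A is a diagonal matrix. -/

import Mathlib

/-- Let `l` be an odd prime, `n ≥ 1` and `A` an `n × n` complex matrix with exactly one
nonzero entry in each row and each column, all nonzero entries being `l`-th roots of unity.
If `trace A = (n − 1) + ζ` for some `l`-th root of unity `ζ ≠ 1`, then `A` is diagonal. -/
theorem isDiag_of_trace_eq {l n : ℕ} (hl : l.Prime) (hodd : Odd l) (hn : 1 ≤ n)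
    (A : Matrix (Fin n) (Fin n) ℂ)
    (hrow : ∀ i, ∃! j, A i j ≠ 0)
    (hcol : ∀ j, ∃! i, A i j ≠ 0)
    (hroot : ∀ i j, A i j ≠ 0 → A i j ^ l = 1)
    (ζ : ℂ) (hζl : ζ ^ l = 1) (hζ1 : ζ ≠ 1)
    (htr : A.trace = ((n : ℂ) - 1) + ζ) :
    A.IsDiag := by
  classical
  set S : Finset (Fin n) := Finset.univ.filter (fun i => A i i ≠ 0) with hS
  have habs : ∀ i ∈ S, ‖A i i‖ = 1 := by
    intro i hi
    rw [hS, Finset.mem_filter] at hi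
    have h := hroot i i hi.2
    have : ‖A i i ^ l‖ = 1 := by rw [h]; simp
    have := Complex.norm_eq_one_of_pow_eq_one h hl.ne_zero
    simpa using this
  have htr' : ∑ i ∈ S, A i i = (n : ℂ) - 1 + ζ := by
    rw [← htr, Matrix.trace, hS]
    simp only [Matrix.diag]
    exact Finset.sum_filter_ne_zero _
  have hζm1 : ζ ≠ -1 := by
    intro h; rw [h, hodd.neg_one_pow] at hζl; norm_num at hζl
  have habsζ : ‖ζ‖ = 1 := by
    simpa using Complex.norm_eq_one_of_pow_eq_one hζl hl.ne_zero
  have hreζ : -1 < ζ.re := by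
    rcases lt_or_eq_of_le (neg_le_of_abs_le (le_trans (Complex.abs_re_le_norm ζ) habsζ.le)) with h | h
    · exact h
    · exfalso
      have him : ζ.im = 0 := by
        have : |ζ.re| = ‖ζ‖ := by rw [habsζ, abs_eq (by norm_num)]; right; linarith
        exact Complex.abs_re_eq_norm.mp this
      exact hζm1 (Complex.ext (by simp [← h]) (by simp [him]))
  have h1 : (n:ℝ) - 1 + ζ.re ≤ S.card := by
    have hre := congrArg Complex.re htr'
    rw [Complex.re_sum] at hre
    simp only [Complex.add_re, Complex.sub_re, Complex.ofReal_re, Complex.natCast_re,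
      Complex.one_re] at hre
    calc (n:ℝ) - 1 + ζ.re = ∑ i ∈ S, (A i i).re := hre.symm
      _ ≤ ∑ i ∈ S, 1 := Finset.sum_le_sum (fun i hi =>
          le_trans (Complex.re_le_norm _) (habs i hi).le)
      _ = S.card := by simp
  have hcardn : S.card ≤ n := by simpa using Finset.card_le_univ S
  have hcard : n - 1 ≤ S.card := by
    have : (n:ℝ) - 2 < S.card := by linarith
    have : (n:ℝ) < S.card + 2 := by linarith
    have : n < S.card + 2 := by exact_mod_cast this
    omega
  have hSn : S.card = n := by
    rcases eq_or_lt_of_le hcardn with h | h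
    · exact h
    -- S.card = n - 1 case: contradiction
    exfalso
    have hc : S.card = n - 1 := by omega
    have hcompl : Sᶜ.card = 1 := by
      rw [Finset.card_compl]; simp [hc]; omega
    obtain ⟨i0, hi0⟩ := Finset.card_eq_one.mp hcompl
    have hi0S : i0 ∉ S := by
      have : i0 ∈ Sᶜ := by rw [hi0]; exact Finset.mem_singleton_self _
      simpa using this
    have hA0 : A i0 i0 = 0 := by
      by_contra h'
      exact hi0S (by rw [hS]; simp [h'])
    obtain ⟨j0, hj0, _⟩ := hrow i0
    have hne : j0 ≠ i0 := fun h => hj0 (h ▸ hA0)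
    have hj0S : j0 ∈ S := by
      by_contra h'
      have : j0 ∈ Sᶜ := Finset.mem_compl.mpr h'
      rw [hi0, Finset.mem_singleton] at this
      exact hne this
    have hAj0 : A j0 j0 ≠ 0 := by
      rw [hS, Finset.mem_filter] at hj0S; exact hj0S.2
    obtain ⟨k, _, hku⟩ := hcol j0
    exact hne ((hku j0 hAj0).symm ▸ (hku i0 hj0).symm ▸ rfl)
  -- S = univ: all diagonal entries nonzero
  have hall : ∀ i, A i i ≠ 0 := by
    intro i
    have : S = Finset.univ := Finset.eq_univ_of_card S (by simpa using hSn)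
    have : i ∈ S := this ▸ Finset.mem_univ i
    rw [hS, Finset.mem_filter] at this
    exact this.2
  intro i j hij
  by_contra h'
  obtain ⟨k, _, hku⟩ := hrow i
  exact hij ((hku j h').trans (hku i (hall i)).symm ▸ rfl)
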